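/- Let W be a block positive Hermitian matrix on ℂ^m⊗ℂ^m and λ > 0 such that A_{kl}^{(W)}(ψ) ≥ −λ for every unit vector ψ, every Schmidt decomposition of ψ, and all k ≠ l. Let ρ be a density matrix on ℂ^m⊗ℂ^m with Tr(ρW) < 0. Then for every pure-state decomposition ρ = Σ_i p_i |ψ_i⟩⟨ψ_i| one has Σ_i p_i C(ψ_i) ≥ √(2/(m(m−1))) · |Tr(ρW)| / λ; consequently every entanglement witness detecting ρ provides the concurrence bound C(ρ) ≥ √(2/(m(m−1))) · |Tr(ρW)| / λ. -/

import Mathlib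

open scoped BigOperators ComplexConjugate ComplexOrder
open Finset Matrix

noncomputable section

/-- Tensor product `a⊗b` of two vectors, `(a⊗b)(x,y) = aₓ·b_y`. -/
def tp {m n : ℕ} (a : Fin m → ℂ) (b : Fin n → ℂ) : Fin m × Fin n → ℂ :=
  fun p => a p.1 * b p.2

/-- The standard Hermitian inner product `⟨f,g⟩ = ∑ i, conj (f i) * g i`. -/
def hip {ι : Type} [Fintype ι] (f g : ι → ℂ) : ℂ := ∑ i, conj (f i) * g i

/-- An orthonormal family of vectors. -/
def Onb {m r : ℕ} (a : Fin r → Fin m → ℂ) : Prop :=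
  ∀ i j, hip (a i) (a j) = if i = j then 1 else 0

/-- `IsSchmidt ψ a b μ` : `ψ = ∑ i, √μᵢ aᵢ⊗bᵢ` is a Schmidt decomposition of `ψ`. -/
def IsSchmidt {m : ℕ} (ψ : Fin m × Fin m → ℂ)
    (a b : Fin m → Fin m → ℂ) (μ : Fin m → ℝ) : Prop :=
  Onb a ∧ Onb b ∧ (∀ i, 0 ≤ μ i) ∧ ∑ i, μ i = 1 ∧
  ψ = fun p => ∑ i, (Real.sqrt (μ i) : ℂ) * tp (a i) (b i) p

/-- `A_{kl}^{(W)}(ψ) = Re⟨a_k⊗b_k, W(a_l⊗b_l)⟩`. -/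
def Acoef {m : ℕ} (W : Matrix (Fin m × Fin m) (Fin m × Fin m) ℂ)
    (a b : Fin m → Fin m → ℂ) (k l : Fin m) : ℝ :=
  (hip (tp (a k) (b k)) (W.mulVec (tp (a l) (b l)))).re

/-- Block positivity: `⟨a⊗b, W(a⊗b)⟩ ≥ 0` for all `a`, `b`. -/
def BlockPos {m : ℕ} (W : Matrix (Fin m × Fin m) (Fin m × Fin m) ℂ) : Prop :=
  ∀ a b : Fin m → ℂ, 0 ≤ (hip (tp a b) (W.mulVec (tp a b))).re

/-- The reduced matrix `ρ_A` of a vector `ψ`. -/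
def rhoA {m n : ℕ} (ψ : Fin m × Fin n → ℂ) : Matrix (Fin m) (Fin m) ℂ :=
  Matrix.of fun x y => ∑ z, ψ (x, z) * conj (ψ (y, z))

/-- Concurrence of a pure state: `C(ψ) = √(2(1 − Tr ρ_A²))`. -/
def concP {m n : ℕ} (ψ : Fin m × Fin n → ℂ) : ℝ :=
  Real.sqrt (2 * (1 - (Matrix.trace (rhoA ψ * rhoA ψ)).re))

/-- Convex-roof concurrence of a mixed state. -/
def concM {m n : ℕ} (ρ : Matrix (Fin m × Fin n) (Fin m × Fin n) ℂ) : ℝ :=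
  sInf { c : ℝ | ∃ (N : ℕ) (p : Fin N → ℝ) (ψ : Fin N → (Fin m × Fin n → ℂ)),
    (∀ i, 0 < p i) ∧ ∑ i, p i = 1 ∧ (∀ i, hip (ψ i) (ψ i) = 1) ∧
    ρ = ∑ i, (p i : ℂ) • Matrix.of (fun x y => ψ i x * conj (ψ i y)) ∧
    c = ∑ i, p i * concP (ψ i) }


/-! ### Auxiliary lemmas on `hip` -/

lemma hip_sum_left {ι : Type} [Fintype ι] {κ : Type} [Fintype κ] (f : κ → ι → ℂ) (g : ι → ℂ) :
    hip (∑ k, f k) g = ∑ k, hip (f k) g := by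
  simp only [hip, Finset.sum_apply, map_sum, Finset.sum_mul]
  exact Finset.sum_comm

lemma hip_sum_right {ι : Type} [Fintype ι] {κ : Type} [Fintype κ] (f : κ → ι → ℂ) (g : ι → ℂ) :
    hip g (∑ k, f k) = ∑ k, hip g (f k) := by
  simp only [hip, Finset.sum_apply, Finset.mul_sum]
  exact Finset.sum_comm

lemma hip_smul_left {ι : Type} [Fintype ι] (r : ℂ) (f g : ι → ℂ) :
    hip (r • f) g = conj r * hip f g := by
  simp only [hip, Pi.smul_apply, smul_eq_mul, _root_.map_mul, Finset.mul_sum, mul_assoc]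

lemma hip_smul_right {ι : Type} [Fintype ι] (r : ℂ) (f g : ι → ℂ) :
    hip f (r • g) = r * hip f g := by
  simp only [hip, Pi.smul_apply, smul_eq_mul, Finset.mul_sum]
  exact Finset.sum_congr rfl fun i _ => by ring

lemma hip_mul_mul {ι : Type} [Fintype ι] (p q : ℂ) (f g : ι → ℂ) :
    hip (fun z => p * f z) (fun z => q * g z) = conj p * (q * hip f g) := by
  simp only [hip, _root_.map_mul, Finset.mul_sum]
  exact Finset.sum_congr rfl fun i _ => by ring

lemma hip_mul_right {ι : Type} [Fintype ι] (q : ℂ) (f g : ι → ℂ) :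
    hip f (fun z => q * g z) = q * hip f g := by
  simp only [hip, Finset.mul_sum]
  exact Finset.sum_congr rfl fun i _ => by ring

lemma mulVec_sum' {ι κ : Type} [Fintype ι] [Fintype κ] (W : Matrix ι ι ℂ) (f : κ → ι → ℂ) :
    W.mulVec (∑ k, f k) = ∑ k, W.mulVec (f k) := by
  ext x
  simp only [Finset.sum_apply, mulVec, dotProduct, Finset.mul_sum]
  exact Finset.sum_comm

lemma hip_inner {ι : Type} [Fintype ι] (f g : EuclideanSpace ℂ ι) :
    @inner ℂ _ _ f g = hip (fun i => f i) (fun i => g i) := by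
  simp [hip, PiLp.inner_apply, RCLike.inner_apply, mul_comm]

/-! ### Spectral decomposition helpers -/

section spec
variable {n : Type} [Fintype n] [DecidableEq n] {A : Matrix n n ℂ} (hA : A.IsHermitian)

/-- column k of the eigenvector unitary -/
def evCol (hA : A.IsHermitian) (k : n) : n → ℂ :=
  fun x => (hA.eigenvectorUnitary : Matrix n n ℂ) x k

lemma evCol_onb (k l : n) : hip (evCol hA k) (evCol hA l) = if k = l then 1 else 0 := by
  have h : (star (hA.eigenvectorUnitary : Matrix n n ℂ)) *
      (hA.eigenvectorUnitary : Matrix n n ℂ) = 1 :=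
    Matrix.mem_unitaryGroup_iff'.mp (hA.eigenvectorUnitary).2
  have := congrFun (congrFun h k) l
  simpa [Matrix.mul_apply, Matrix.one_apply, hip, evCol, Matrix.star_apply, eq_comm] using this

lemma evCol_complete (x y : n) :
    ∑ k, evCol hA k x * conj (evCol hA k y) = if x = y then 1 else 0 := by
  have h : (hA.eigenvectorUnitary : Matrix n n ℂ) *
      star (hA.eigenvectorUnitary : Matrix n n ℂ) = 1 :=
    Matrix.mem_unitaryGroup_iff.mp (hA.eigenvectorUnitary).2
  have := congrFun (congrFun h x) y
  simpa [Matrix.mul_apply, Matrix.one_apply, evCol, Matrix.star_apply] using this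

lemma spec_entry (x y : n) :
    A x y = ∑ k, (hA.eigenvalues k : ℂ) * (evCol hA k x * conj (evCol hA k y)) := by
  conv_lhs => rw [hA.spectral_theorem, Unitary.conjStarAlgAut_apply]
  rw [Matrix.mul_apply]
  refine Finset.sum_congr rfl fun k _ => ?_
  simp only [Matrix.mul_diagonal, Matrix.star_apply, evCol, Function.comp, RCLike.star_def]
  rw [show ∀ r : ℝ, (RCLike.ofReal (K:=ℂ)) r = (r:ℂ) from fun _ => rfl]
  ring

lemma spec_mulVec (k : n) :
    A.mulVec (evCol hA k) = fun x => (hA.eigenvalues k : ℂ) * evCol hA k x := by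
  have h := hA.mulVec_eigenvectorBasis k
  have hb : ⇑(hA.eigenvectorBasis k) = evCol hA k := by
    funext x
    exact (hA.eigenvectorUnitary_apply x k).symm
  rw [hb] at h
  funext x
  have := congrFun h x
  simpa using this

lemma spec_trace : A.trace = ∑ k, (hA.eigenvalues k : ℂ) := by
  have h1 : (star (hA.eigenvectorUnitary : Matrix n n ℂ)) *
      (hA.eigenvectorUnitary : Matrix n n ℂ) = 1 :=
    Matrix.mem_unitaryGroup_iff'.mp (hA.eigenvectorUnitary).2
  conv_lhs => rw [hA.spectral_theorem, Unitary.conjStarAlgAut_apply]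
  rw [Matrix.trace_mul_cycle, h1, Matrix.one_mul]
  simp only [Matrix.trace_diagonal, Function.comp]
  exact Finset.sum_congr rfl fun k _ => rfl

lemma spec_trace_sq : (A * A).trace = ∑ k, ((hA.eigenvalues k : ℂ))^2 := by
  have h1 : (star (hA.eigenvectorUnitary : Matrix n n ℂ)) *
      (hA.eigenvectorUnitary : Matrix n n ℂ) = 1 :=
    Matrix.mem_unitaryGroup_iff'.mp (hA.eigenvectorUnitary).2
  set U := (hA.eigenvectorUnitary : Matrix n n ℂ)
  set D := Matrix.diagonal ((RCLike.ofReal ∘ hA.eigenvalues : n → ℂ)) with hD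
  have h2 : A * A = U * (D * D) * star U := by
    conv_lhs => rw [hA.spectral_theorem]
    calc (U * D * star U) * (U * D * star U)
        = U * D * ((star U * U) * (D * star U)) := by
          simp only [Matrix.mul_assoc]
      _ = U * (D * D) * star U := by rw [h1, Matrix.one_mul]; simp only [Matrix.mul_assoc]
  rw [h2, Matrix.trace_mul_cycle, h1, Matrix.one_mul]
  rw [hD, Matrix.diagonal_mul_diagonal]
  simp only [Matrix.trace_diagonal, Function.comp]
  exact Finset.sum_congr rfl fun k _ => by rw [sq]; rfl

end spec

/-! ### Existence of Schmidt decompositions -/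

lemma rhoA_posSemidef {m : ℕ} (ψ : Fin m × Fin m → ℂ) : (rhoA ψ).PosSemidef := by
  have h : rhoA ψ = (Matrix.of fun x z => ψ (x, z)) * (Matrix.of fun x z => ψ (x, z))ᴴ := by
    ext x y
    simp [rhoA, Matrix.mul_apply, Matrix.conjTranspose_apply]
  rw [h]
  exact Matrix.posSemidef_self_mul_conjTranspose _

lemma exists_schmidt {m : ℕ} (ψ : Fin m × Fin m → ℂ) (hψ : hip ψ ψ = 1) :
    ∃ a b μ, IsSchmidt ψ a b μ ∧ (Matrix.trace (rhoA ψ * rhoA ψ)).re = ∑ k, (μ k)^2 := by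
  have hpsd := rhoA_posSemidef ψ
  have hR : (rhoA ψ).IsHermitian := hpsd.isHermitian
  set μ : Fin m → ℝ := hR.eigenvalues with hμ
  have hμ0 : ∀ k, 0 ≤ μ k := hpsd.eigenvalues_nonneg
  set a : Fin m → Fin m → ℂ := evCol hR with ha
  have haonb : Onb a := evCol_onb hR
  -- trace = 1 gives ∑ μ = 1
  have htr : (rhoA ψ).trace = 1 := by
    have h1 : (rhoA ψ).trace = hip ψ ψ := by
      simp [rhoA, Matrix.trace, Matrix.diag, hip, Fintype.sum_prod_type, mul_comm]
    rw [h1, hψ]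
  have hμsum : ∑ k, μ k = 1 := by
    have h2 := spec_trace hR
    rw [htr] at h2
    have h3 : ((∑ k, μ k : ℝ) : ℂ) = ((1 : ℝ) : ℂ) := by
      push_cast
      exact h2.symm
    exact_mod_cast h3
  -- the (unnormalised) partner vectors
  set c : Fin m → Fin m → ℂ := fun k z => ∑ x, conj (a k x) * ψ (x, z) with hc
  have hcc : ∀ k l, hip (c k) (c l) = if k = l then (μ k : ℂ) else 0 := by
    intro k l
    have hL : hip (c k) (c l) =
        ∑ x, ∑ y, ∑ z, a k y * conj (ψ (y, z)) * (conj (a l x) * ψ (x, z)) := by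
      simp only [hip, hc, map_sum, _root_.map_mul, Complex.conj_conj]
      simp only [Finset.sum_mul, Finset.mul_sum]
      rw [Finset.sum_comm]
      refine Finset.sum_congr rfl fun x _ => ?_
      rw [Finset.sum_comm]
      all_goals exact Finset.sum_congr rfl fun y _ => Finset.sum_congr rfl fun z _ => by ring
    have hRr : hip (a k) ((rhoA ψ).mulVec (a l)) =
        conj (∑ x, ∑ y, ∑ z, a k y * conj (ψ (y, z)) * (conj (a l x) * ψ (x, z))) := by
      simp only [hip, rhoA, Matrix.mulVec, dotProduct, Matrix.of_apply,
        map_sum, _root_.map_mul, Complex.conj_conj]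
      simp only [Finset.sum_mul, Finset.mul_sum]
      rw [Finset.sum_comm]
      refine Finset.sum_congr rfl fun x _ => Finset.sum_congr rfl fun y _ =>
        Finset.sum_congr rfl fun z _ => by ring
    have hmv : (rhoA ψ).mulVec (a l) = fun x => (μ l : ℂ) * a l x := spec_mulVec hR l
    have hRr2 : hip (a k) ((rhoA ψ).mulVec (a l)) = (μ l : ℂ) * (if k = l then 1 else 0) := by
      rw [hmv, hip_mul_right, haonb k l]
    rw [hL, ← Complex.conj_conj (∑ x, ∑ y, _), ← hRr, hRr2]
    rcases eq_or_ne k l with h | h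
    · subst h; simp [Complex.conj_ofReal]
    · simp [h]
  -- orthonormalisation of the partner vectors
  set v : Fin m → EuclideanSpace ℂ (Fin m) :=
    fun k => (WithLp.equiv 2 _).symm (fun z => ((Real.sqrt (μ k) : ℂ))⁻¹ * c k z) with hv
  set s : Set (Fin m) := {k | 0 < μ k} with hs
  have hvo : Orthonormal ℂ (s.restrict v) := by
    rw [orthonormal_iff_ite]
    rintro ⟨k, hk⟩ ⟨l, hl⟩
    have hk' : 0 < μ k := hk
    have hl' : 0 < μ l := hl
    have hin : (inner ℂ (v k) (v l) : ℂ) =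
        hip (fun z => ((Real.sqrt (μ k) : ℂ))⁻¹ * c k z)
            (fun z => ((Real.sqrt (μ l) : ℂ))⁻¹ * c l z) := by
      rw [hip_inner]
      simp only [hv, WithLp.equiv_symm_apply, WithLp.ofLp_toLp]
    have : (inner ℂ (v k) (v l) : ℂ) =
        conj (((Real.sqrt (μ k) : ℂ))⁻¹) * ((((Real.sqrt (μ l) : ℂ))⁻¹) *
          (if k = l then (μ k : ℂ) else 0)) := by
      rw [hin, hip_mul_mul, hcc k l]
    rw [show s.restrict v ⟨k, hk⟩ = v k from rfl, show s.restrict v ⟨l, hl⟩ = v l from rfl, this]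
    rcases eq_or_ne k l with h | h
    · subst h
      have h1 : Real.sqrt (μ k) ≠ 0 := by positivity
      have h2 : ((Real.sqrt (μ k) : ℂ)) * ((Real.sqrt (μ k) : ℂ)) = (μ k : ℂ) := by
        rw [← Complex.ofReal_mul, Real.mul_self_sqrt (le_of_lt hk')]
      simp only [if_pos rfl, map_inv₀, Complex.conj_ofReal]
      rw [← h2]
      have h3 : ((Real.sqrt (μ k) : ℂ)) ≠ 0 := by exact_mod_cast h1
      field_simp
      simp
    · have : (⟨k, hk⟩ : s) ≠ ⟨l, hl⟩ := by simpa using h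
      simp [h, this]
  have hcard : Module.finrank ℂ (EuclideanSpace ℂ (Fin m)) = Fintype.card (Fin m) :=
    finrank_euclideanSpace
  obtain ⟨B, hB⟩ := hvo.exists_orthonormalBasis_extension_of_card_eq hcard
  set b : Fin m → Fin m → ℂ := fun k z => B k z with hb
  have hbonb : Onb b := by
    intro k l
    have h1 := orthonormal_iff_ite.mp B.orthonormal k l
    rw [hip_inner] at h1
    exact h1
  have hkey : ∀ k z, (Real.sqrt (μ k) : ℂ) * b k z = c k z := by
    intro k z
    by_cases hk : 0 < μ k
    · have hBk : B k = v k := hB k hk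
      have h1 : b k z = ((Real.sqrt (μ k) : ℂ))⁻¹ * c k z := by
        rw [hb]
        simp only [hBk, hv, WithLp.equiv_symm_apply, WithLp.ofLp_toLp]
      rw [h1]
      have h2 : ((Real.sqrt (μ k) : ℂ)) ≠ 0 := by
        have : Real.sqrt (μ k) ≠ 0 := by positivity
        exact_mod_cast this
      field_simp
    · have hk0 : μ k = 0 := le_antisymm (not_lt.mp hk) (hμ0 k)
      have h0 : hip (c k) (c k) = 0 := by rw [hcc k k]; simp [hk0]
      have h1 : ((∑ w, Complex.normSq (c k w) : ℝ) : ℂ) = 0 := by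
        rw [← h0]
        simp only [hip, Complex.ofReal_sum]
        exact Finset.sum_congr rfl fun w _ => (Complex.normSq_eq_conj_mul_self).symm ▸ rfl
      have h2 : ∑ w, Complex.normSq (c k w) = 0 := by exact_mod_cast h1
      have h3 := (Finset.sum_eq_zero_iff_of_nonneg
        (fun w _ => Complex.normSq_nonneg (c k w))).mp h2 z (Finset.mem_univ z)
      have h4 : c k z = 0 := Complex.normSq_eq_zero.mp h3
      rw [h4, hk0]
      simp
  have hexp : ψ = fun p => ∑ k, (Real.sqrt (μ k) : ℂ) * tp (a k) (b k) p := by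
    funext p
    obtain ⟨x, z⟩ := p
    have h1 : ∀ k, (Real.sqrt (μ k) : ℂ) * tp (a k) (b k) (x, z) = a k x * c k z := by
      intro k
      rw [show tp (a k) (b k) (x, z) = a k x * b k z from rfl, ← hkey k z]
      ring
    rw [show (∑ k, (Real.sqrt (μ k) : ℂ) * tp (a k) (b k) (x, z)) = ∑ k, a k x * c k z from
      Finset.sum_congr rfl fun k _ => h1 k]
    have h2 : ∑ k, a k x * c k z = ∑ y, (∑ k, a k x * conj (a k y)) * ψ (y, z) := by
      simp only [hc, Finset.mul_sum, Finset.sum_mul]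
      rw [Finset.sum_comm]
      exact Finset.sum_congr rfl fun y _ => Finset.sum_congr rfl fun k _ => by ring
    rw [h2]
    have h3 : ∀ y, (∑ k, a k x * conj (a k y)) = if x = y then 1 else 0 := fun y =>
      evCol_complete hR x y
    simp only [h3]
    simp
  refine ⟨a, b, μ, ⟨haonb, hbonb, hμ0, hμsum, hexp⟩, ?_⟩
  rw [spec_trace_sq hR]
  simp only [← Complex.ofReal_pow, ← Complex.ofReal_sum, Complex.ofReal_re]
  rfl

/-! ### The bound for pure states -/

lemma trace_of_mul {ι : Type} [Fintype ι] (f : ι → ℂ) (W : Matrix ι ι ℂ) :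
    Matrix.trace (Matrix.of (fun x y => f x * conj (f y)) * W) = hip f (W.mulVec f) := by
  simp only [Matrix.trace, Matrix.diag, Matrix.mul_apply, Matrix.of_apply, hip,
    Matrix.mulVec, dotProduct, Finset.mul_sum]
  rw [Finset.sum_comm]
  exact Finset.sum_congr rfl fun y _ => Finset.sum_congr rfl fun x _ => by ring

lemma pure_bound {m : ℕ} (W : Matrix (Fin m × Fin m) (Fin m × Fin m) ℂ)
    (hBP : BlockPos W) (lam : ℝ) (hlam : 0 ≤ lam)
    (hA : ∀ (ψ : Fin m × Fin m → ℂ) (a b : Fin m → Fin m → ℂ) (μ : Fin m → ℝ),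
      hip ψ ψ = 1 → IsSchmidt ψ a b μ → ∀ k l, k ≠ l → -lam ≤ Acoef W a b k l)
    (ψ : Fin m × Fin m → ℂ) (hψ : hip ψ ψ = 1) :
    -(hip ψ (W.mulVec ψ)).re ≤
      lam * (Real.sqrt ((m:ℝ) * ((m:ℝ) - 1)) * concP ψ) / Real.sqrt 2 := by
  obtain ⟨a, b, μ, hS, htr2⟩ := exists_schmidt ψ hψ
  obtain ⟨haonb, hbonb, hμ0, hμsum, hexp⟩ := hS
  set t : Fin m → Fin m × Fin m → ℂ := fun k => tp (a k) (b k) with ht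
  set sk : Fin m → ℂ := fun k => (Real.sqrt (μ k) : ℂ) with hsk
  have hψs : ψ = ∑ k, sk k • t k := by
    rw [hexp]
    funext p
    rw [Finset.sum_apply]
    rfl
  have hWψ : W.mulVec ψ = ∑ l, sk l • W.mulVec (t l) := by
    rw [hψs, mulVec_sum']
    exact Finset.sum_congr rfl fun l _ => Matrix.mulVec_smul W (sk l) (t l)
  have hq : hip ψ (W.mulVec ψ) =
      ∑ k, ∑ l, (sk k * sk l) * hip (t k) (W.mulVec (t l)) := by
    conv_lhs => rw [hWψ, hψs]
    rw [hip_sum_left]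
    refine Finset.sum_congr rfl fun k _ => ?_
    rw [hip_sum_right]
    refine Finset.sum_congr rfl fun l _ => ?_
    rw [hip_smul_left, hip_smul_right, hsk]
    simp only [Complex.conj_ofReal]
    ring
  have hre : (hip ψ (W.mulVec ψ)).re =
      ∑ k, ∑ l, (Real.sqrt (μ k) * Real.sqrt (μ l)) * Acoef W a b k l := by
    rw [hq, Complex.re_sum]
    refine Finset.sum_congr rfl fun k _ => ?_
    rw [Complex.re_sum]
    refine Finset.sum_congr rfl fun l _ => ?_
    rw [hsk]
    simp only [← Complex.ofReal_mul]
    rw [Complex.re_ofReal_mul]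
    rfl
  -- split diagonal and off-diagonal
  have hsplit : (hip ψ (W.mulVec ψ)).re =
      (∑ p ∈ Finset.univ.diag,
        (Real.sqrt (μ p.1) * Real.sqrt (μ p.2)) * Acoef W a b p.1 p.2) +
      ∑ p ∈ Finset.univ.offDiag,
        (Real.sqrt (μ p.1) * Real.sqrt (μ p.2)) * Acoef W a b p.1 p.2 := by
    rw [hre, ← Finset.sum_product']
    rw [← Finset.diag_union_offDiag (Finset.univ : Finset (Fin m)),
      Finset.sum_union (Finset.disjoint_diag_offDiag _)]
  have hSchmidt : IsSchmidt ψ a b μ := ⟨haonb, hbonb, hμ0, hμsum, hexp⟩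
  have hdiag : 0 ≤ ∑ p ∈ Finset.univ.diag,
      (Real.sqrt (μ p.1) * Real.sqrt (μ p.2)) * Acoef W a b p.1 p.2 := by
    refine Finset.sum_nonneg fun p hp => mul_nonneg
      (mul_nonneg (Real.sqrt_nonneg _) (Real.sqrt_nonneg _)) ?_
    have hp12 : p.1 = p.2 := (Finset.mem_diag.mp hp).2
    rw [← hp12]
    exact hBP (a p.1) (b p.1)
  set S : ℝ := ∑ p ∈ Finset.univ.offDiag, Real.sqrt (μ p.1) * Real.sqrt (μ p.2) with hSdef
  have hS0 : 0 ≤ S := Finset.sum_nonneg fun p _ =>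
    mul_nonneg (Real.sqrt_nonneg _) (Real.sqrt_nonneg _)
  have hoff : -(lam * S) ≤ ∑ p ∈ Finset.univ.offDiag,
      (Real.sqrt (μ p.1) * Real.sqrt (μ p.2)) * Acoef W a b p.1 p.2 := by
    have h0 : -(lam * S) = ∑ p ∈ Finset.univ.offDiag,
        (Real.sqrt (μ p.1) * Real.sqrt (μ p.2)) * (-lam) := by
      rw [hSdef, ← Finset.sum_mul]
      ring
    rw [h0]
    refine Finset.sum_le_sum fun p hp => ?_
    have hne : p.1 ≠ p.2 := (Finset.mem_offDiag.mp hp).2.2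
    exact mul_le_mul_of_nonneg_left (hA ψ a b μ hψ hSchmidt p.1 p.2 hne)
      (mul_nonneg (Real.sqrt_nonneg _) (Real.sqrt_nonneg _))
  have hmain : -(hip ψ (W.mulVec ψ)).re ≤ lam * S := by
    rw [hsplit]
    linarith
  have hCS : S ≤ Real.sqrt (∑ p ∈ Finset.univ.offDiag, μ p.1 * μ p.2) *
      Real.sqrt (((Finset.univ : Finset (Fin m)).offDiag.card : ℝ)) := by
    have h1 := Real.sum_mul_le_sqrt_mul_sqrt ((Finset.univ : Finset (Fin m)).offDiag)
      (fun p => Real.sqrt (μ p.1 * μ p.2)) (fun _ => 1)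
    simp only [mul_one, one_pow, Finset.sum_const, nsmul_eq_mul] at h1
    have h2 : ∀ p ∈ (Finset.univ : Finset (Fin m)).offDiag,
        Real.sqrt (μ p.1 * μ p.2) ^ 2 = μ p.1 * μ p.2 := fun p _ =>
      Real.sq_sqrt (mul_nonneg (hμ0 _) (hμ0 _))
    rw [Finset.sum_congr rfl h2] at h1
    calc S = ∑ p ∈ Finset.univ.offDiag, Real.sqrt (μ p.1 * μ p.2) :=
          Finset.sum_congr rfl fun p _ => (Real.sqrt_mul (hμ0 p.1) (μ p.2)).symm
      _ ≤ _ := h1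
  have hoffsum : ∑ p ∈ Finset.univ.offDiag, μ p.1 * μ p.2 = 1 - ∑ k, (μ k)^2 := by
    have h1 : ∑ p ∈ (Finset.univ ×ˢ Finset.univ : Finset (Fin m × Fin m)), μ p.1 * μ p.2
        = (∑ k, μ k) * (∑ k, μ k) := by
      rw [Finset.sum_product]
      exact (Finset.sum_mul_sum _ _ _ _).symm
    rw [← Finset.diag_union_offDiag (Finset.univ : Finset (Fin m)),
      Finset.sum_union (Finset.disjoint_diag_offDiag _)] at h1
    have h2 : ∑ p ∈ (Finset.univ : Finset (Fin m)).diag, μ p.1 * μ p.2 = ∑ k, (μ k)^2 := by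
      rw [Finset.sum_diag]
      exact Finset.sum_congr rfl fun k _ => (sq (μ k)).symm
    rw [h2, hμsum] at h1
    linarith
  have hoffnn : 0 ≤ 1 - ∑ k, (μ k)^2 := by
    rw [← hoffsum]
    exact Finset.sum_nonneg fun p _ => mul_nonneg (hμ0 _) (hμ0 _)
  have hcard : (((Finset.univ : Finset (Fin m)).offDiag.card : ℕ) : ℝ)
      = (m:ℝ) * ((m:ℝ) - 1) := by
    rw [Finset.offDiag_card]
    have hmm : m ≤ m * m := by
      cases m with
      | zero => simp
      | succ n => exact Nat.le_mul_of_pos_left _ (Nat.succ_pos n)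
    rw [Finset.card_univ, Fintype.card_fin]
    push_cast [Nat.cast_sub hmm]
    ring
  have hconc : concP ψ = Real.sqrt 2 * Real.sqrt (1 - ∑ k, (μ k)^2) := by
    rw [concP, htr2, ← Real.sqrt_mul (by norm_num : (0:ℝ) ≤ 2)]
  have hfinal : S ≤ Real.sqrt ((m:ℝ)*((m:ℝ)-1)) * concP ψ / Real.sqrt 2 := by
    have h2 : Real.sqrt 2 ≠ 0 := by positivity
    rw [hconc]
    calc S ≤ Real.sqrt (1 - ∑ k, (μ k)^2) * Real.sqrt ((m:ℝ)*((m:ℝ)-1)) := by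
          rw [← hoffsum, ← hcard]
          exact hCS
      _ = Real.sqrt ((m:ℝ)*((m:ℝ)-1)) *
            (Real.sqrt 2 * Real.sqrt (1 - ∑ k, (μ k)^2)) / Real.sqrt 2 := by
          field_simp
  calc -(hip ψ (W.mulVec ψ)).re ≤ lam * S := hmain
    _ ≤ lam * (Real.sqrt ((m:ℝ)*((m:ℝ)-1)) * concP ψ / Real.sqrt 2) :=
        mul_le_mul_of_nonneg_left hfinal hlam
    _ = lam * (Real.sqrt ((m:ℝ)*((m:ℝ)-1)) * concP ψ) / Real.sqrt 2 := by ring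



/-- If `W` is a block positive Hermitian matrix with `A_{kl}^{(W)}(ψ) ≥ −λ`
(`λ > 0`) for every unit vector `ψ`, every Schmidt decomposition and all
`k ≠ l`, and `ρ` is a density matrix with `Tr(ρW) < 0`, then every pure-state
decomposition of `ρ` satisfies
`∑ᵢ pᵢ C(ψᵢ) ≥ √(2/(m(m−1))) |Tr(ρW)| / λ`, and hence
`C(ρ) ≥ √(2/(m(m−1))) |Tr(ρW)| / λ`. -/
theorem stmt8 {m : ℕ} (W : Matrix (Fin m × Fin m) (Fin m × Fin m) ℂ)
    (hW : W.IsHermitian) (hBP : BlockPos W)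
    (lam : ℝ) (hlam : 0 < lam)
    (hA : ∀ (ψ : Fin m × Fin m → ℂ) (a b : Fin m → Fin m → ℂ) (μ : Fin m → ℝ),
      hip ψ ψ = 1 → IsSchmidt ψ a b μ → ∀ k l, k ≠ l → -lam ≤ Acoef W a b k l)
    (ρ : Matrix (Fin m × Fin m) (Fin m × Fin m) ℂ)
    (hρ : ρ.PosSemidef) (hρtr : ρ.trace = 1)
    (hdet : (Matrix.trace (ρ * W)).re < 0) :
    (∀ (N : ℕ) (p : Fin N → ℝ) (ψ : Fin N → (Fin m × Fin m → ℂ)),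
      (∀ i, 0 < p i) → ∑ i, p i = 1 → (∀ i, hip (ψ i) (ψ i) = 1) →
      ρ = ∑ i, (p i : ℂ) • Matrix.of (fun x y => ψ i x * conj (ψ i y)) →
      Real.sqrt (2 / ((m : ℝ) * ((m : ℝ) - 1)))
          * |(Matrix.trace (ρ * W)).re| / lam
        ≤ ∑ i, p i * concP (ψ i)) ∧
    Real.sqrt (2 / ((m : ℝ) * ((m : ℝ) - 1)))
        * |(Matrix.trace (ρ * W)).re| / lam
      ≤ concM ρ := by
  classical
  set T := (Matrix.trace (ρ * W)).re with hT
  have habs : |T| = -T := abs_of_neg hdet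
  have part1 : ∀ (N : ℕ) (p : Fin N → ℝ) (ψ : Fin N → (Fin m × Fin m → ℂ)),
      (∀ i, 0 < p i) → ∑ i, p i = 1 → (∀ i, hip (ψ i) (ψ i) = 1) →
      ρ = ∑ i, (p i : ℂ) • Matrix.of (fun x y => ψ i x * conj (ψ i y)) →
      Real.sqrt (2 / ((m : ℝ) * ((m : ℝ) - 1))) * |T| / lam ≤ ∑ i, p i * concP (ψ i) := by
    intro N p ψ hp hpsum hunit hdec
    set C := ∑ i, p i * concP (ψ i) with hC
    have hC0 : 0 ≤ C :=
      Finset.sum_nonneg fun i _ => mul_nonneg (hp i).le (Real.sqrt_nonneg _)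
    by_cases hm : (m:ℝ) * ((m:ℝ) - 1) ≤ 0
    · have h2 : (2:ℝ) / ((m:ℝ)*((m:ℝ)-1)) ≤ 0 := by
        rcases lt_or_eq_of_le hm with h | h
        · exact le_of_lt (div_neg_of_pos_of_neg (by norm_num) h)
        · rw [h, div_zero]
      rw [Real.sqrt_eq_zero'.mpr h2, zero_mul, zero_div]
      exact hC0
    · push_neg at hm
      have hbound := fun i => pure_bound W hBP lam hlam.le hA (ψ i) (hunit i)
      have htrd : Matrix.trace (ρ * W) = ∑ i, (p i : ℂ) * hip (ψ i) (W.mulVec (ψ i)) := by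
        rw [hdec, Finset.sum_mul, Matrix.trace_sum]
        refine Finset.sum_congr rfl fun i _ => ?_
        rw [Matrix.smul_mul, Matrix.trace_smul, trace_of_mul]
        simp [smul_eq_mul]
      have hTsum : T = ∑ i, p i * (hip (ψ i) (W.mulVec (ψ i))).re := by
        rw [hT, htrd, Complex.re_sum]
        exact Finset.sum_congr rfl fun i _ => Complex.re_ofReal_mul _ _
      set K := Real.sqrt ((m:ℝ)*((m:ℝ)-1)) with hK
      have hK0 : 0 < K := Real.sqrt_pos.mpr hm
      have hs2 : (0:ℝ) < Real.sqrt 2 := by positivity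
      have hTle : -T ≤ lam * K * C / Real.sqrt 2 := by
        have h1 : -T = ∑ i, p i * (-(hip (ψ i) (W.mulVec (ψ i))).re) := by
          rw [hTsum, ← Finset.sum_neg_distrib]
          exact Finset.sum_congr rfl fun i _ => by ring
        have h2 : ∑ i, p i * (-(hip (ψ i) (W.mulVec (ψ i))).re)
            ≤ ∑ i, p i * (lam * (K * concP (ψ i)) / Real.sqrt 2) :=
          Finset.sum_le_sum fun i _ => mul_le_mul_of_nonneg_left (hbound i) (hp i).le
        have h3 : lam * K * C / Real.sqrt 2
            = ∑ i, p i * (lam * (K * concP (ψ i)) / Real.sqrt 2) := by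
          rw [hC, Finset.mul_sum, Finset.sum_div]
          exact Finset.sum_congr rfl fun i _ => by ring
        rw [h1, h3]
        exact h2
      have hsqrt : Real.sqrt (2 / ((m:ℝ)*((m:ℝ)-1))) = Real.sqrt 2 / K := by
        rw [hK, Real.sqrt_div (by norm_num : (0:ℝ) ≤ 2)]
      rw [hsqrt, habs, div_le_iff₀ hlam, div_mul_eq_mul_div, div_le_iff₀ hK0]
      have h4 : Real.sqrt 2 * (-T) ≤ Real.sqrt 2 * (lam * K * C / Real.sqrt 2) :=
        mul_le_mul_of_nonneg_left hTle hs2.le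
      have h5 : Real.sqrt 2 * (lam * K * C / Real.sqrt 2) = C * lam * K := by
        field_simp
      linarith
  refine ⟨part1, ?_⟩
  by_cases hm : (m:ℝ) * ((m:ℝ) - 1) ≤ 0
  · have h2 : (2:ℝ) / ((m:ℝ)*((m:ℝ)-1)) ≤ 0 := by
      rcases lt_or_eq_of_le hm with h | h
      · exact le_of_lt (div_neg_of_pos_of_neg (by norm_num) h)
      · rw [h, div_zero]
    rw [Real.sqrt_eq_zero'.mpr h2, zero_mul, zero_div]
    refine Real.sInf_nonneg fun c hc => ?_
    obtain ⟨N, p, ψ, hp, _, _, _, rfl⟩ := hc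
    exact Finset.sum_nonneg fun i _ => mul_nonneg (hp i).le (Real.sqrt_nonneg _)
  · -- construct a decomposition of ρ from the spectral theorem
    have hH : ρ.IsHermitian := hρ.1
    set ε : Fin m × Fin m → ℝ := hH.eigenvalues with hε
    have hε0 : ∀ i, 0 ≤ ε i := hρ.eigenvalues_nonneg
    set v : Fin m × Fin m → (Fin m × Fin m → ℂ) := fun i => evCol hH i with hvdef
    have hεsum : ∑ i, ε i = 1 := by
      have h2 := spec_trace hH
      rw [hρtr] at h2
      have h3 : ((∑ i, ε i : ℝ) : ℂ) = ((1:ℝ) : ℂ) := by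
        push_cast
        exact h2.symm
      exact_mod_cast h3
    have hρdec : ρ = ∑ i, (ε i : ℂ) • Matrix.of (fun x y => v i x * conj (v i y)) := by
      ext x y
      rw [spec_entry hH x y, Matrix.sum_apply]
      exact Finset.sum_congr rfl fun i _ => by
        simp [Matrix.smul_apply, Matrix.of_apply, smul_eq_mul]
        rfl
    have hv1 : ∀ i, hip (v i) (v i) = 1 := fun i => by simpa using evCol_onb hH i i
    set s0 : Finset (Fin m × Fin m) := Finset.univ.filter (fun i => ε i ≠ 0) with hs0
    set e : Fin s0.card ≃ s0 := s0.equivFin.symm with he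
    have hmem : ∀ j, (e j : Fin m × Fin m) ∈ s0 := fun j => (e j).2
    have key : ∀ {M : Type} [AddCommMonoid M] (g : (Fin m × Fin m) → M),
        (∀ i, ε i = 0 → g i = 0) → ∑ j, g (e j) = ∑ i, g i := by
      intro M _ g hg
      have h1 : ∑ j, g (e j) = ∑ i : s0, g i := Fintype.sum_equiv e _ _ (fun j => rfl)
      rw [h1, Finset.sum_coe_sort]
      refine Finset.sum_subset (Finset.filter_subset _ _) ?_
      intro i _ hi
      refine hg i ?_
      by_contra h
      exact hi (Finset.mem_filter.mpr ⟨Finset.mem_univ i, h⟩)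
    set p0 : Fin s0.card → ℝ := fun j => ε (e j) with hp0
    set ψ0 : Fin s0.card → (Fin m × Fin m → ℂ) := fun j => v (e j) with hψ0
    have hp0pos : ∀ j, 0 < p0 j := fun j =>
      lt_of_le_of_ne (hε0 _) (Ne.symm ((Finset.mem_filter.mp (hmem j)).2))
    have hpsum0 : ∑ j, p0 j = 1 := by
      rw [hp0]
      rw [key (fun i => ε i) (fun i h => h)]
      exact hεsum
    have hdec0 : ρ = ∑ j, (p0 j : ℂ) • Matrix.of (fun x y => ψ0 j x * conj (ψ0 j y)) := by
      rw [hρdec]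
      exact (key (fun i => (ε i : ℂ) • Matrix.of fun x y => v i x * conj (v i y))
        (fun i h => by simp [h])).symm
    have hunit0 : ∀ j, hip (ψ0 j) (ψ0 j) = 1 := fun j => hv1 _
    have hne : { c : ℝ | ∃ (N : ℕ) (p : Fin N → ℝ) (ψ : Fin N → (Fin m × Fin m → ℂ)),
        (∀ i, 0 < p i) ∧ ∑ i, p i = 1 ∧ (∀ i, hip (ψ i) (ψ i) = 1) ∧
        ρ = ∑ i, (p i : ℂ) • Matrix.of (fun x y => ψ i x * conj (ψ i y)) ∧
        c = ∑ i, p i * concP (ψ i) }.Nonempty :=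
      ⟨∑ j, p0 j * concP (ψ0 j), s0.card, p0, ψ0, hp0pos, hpsum0, hunit0, hdec0, rfl⟩
    refine le_csInf hne ?_
    rintro c ⟨N, p, ψq, h1, h2, h3, h4, rfl⟩
    exact part1 N p ψq h1 h2 h3 h4

end
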